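/- Let k ≥ 2 and 1 ≤ r ≤ k be integers. Then the number of r-element subsets A of {0, 1, ..., k-1} with f_k(A) = k is |𝒜_k(r,k)| = Σ_{s | gcd(k,r)} C(k/s, r/s) · μ(s), where the sum is over all positive divisors s of gcd(k,r). -/

import Mathlib

open Finset

/-- The set of residues of `A` modulo `k`. -/
def resSet (k : ℕ) (A : Finset ℕ) : Finset ℕ := A.image (· % k)

/-- The set `A + t = {a + t : a ∈ A}`. -/
def shiftSet (A : Finset ℕ) (t : ℕ) : Finset ℕ := A.image (· + t)

/-- Two finite sets of naturals are equal modulo `k` if they have the same residues mod `k`. -/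
def eqMod (k : ℕ) (A B : Finset ℕ) : Prop := resSet k A = resSet k B

/-- `fk k A` is the least positive `l` with `A + l` equal to `A` modulo `k`. -/
noncomputable def fk (k : ℕ) (A : Finset ℕ) : ℕ :=
  sInf {l : ℕ | 0 < l ∧ eqMod k (shiftSet A l) A}

/-- `𝒜(j, i)`: the collection of all `j`-element subsets of `{0, 1, ..., i-1}`. -/
def Acoll (j i : ℕ) : Finset (Finset ℕ) :=
  (Finset.range i).powerset.filter (fun A => A.card = j)

open scoped Classical in
/-- `𝒜_s(j, i)`: the members `A` of `𝒜(j, i)` with `f_i(A) = s`. -/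
noncomputable def Asub (s j i : ℕ) : Finset (Finset ℕ) :=
  (Acoll j i).filter (fun A => fk i A = s)

/-- The orbit of `A` under shifting modulo `k`: the residue sets of `A + j`, `0 ≤ j < k`.
Two subsets of `{0, ..., k-1}` are `k`-equivalent iff their orbits coincide. -/
def orb (k : ℕ) (A : Finset ℕ) : Finset (Finset ℕ) :=
  (Finset.range k).image (fun j => resSet k (shiftSet A j))

/-- `|𝒫_n(r, k)|`: the number of `k`-equivalence classes of `𝒜_n(r, k)`. -/
noncomputable def numClasses (n r k : ℕ) : ℕ := ((Asub n r k).image (orb k)).card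

/-! ### Auxiliary development -/

/-- Shift modulo `k`. -/
def shmod (k l : ℕ) (A : Finset ℕ) : Finset ℕ := A.image (fun x => (x + l) % k)

lemma resSet_shift (k l : ℕ) (A : Finset ℕ) : resSet k (shiftSet A l) = shmod k l A := by
  unfold resSet shiftSet shmod
  rw [image_image]
  rfl

lemma resSet_self {k : ℕ} {A : Finset ℕ} (hA : A ⊆ range k) : resSet k A = A := by
  unfold resSet
  rw [show A.image (· % k) = A.image id from
    image_congr (fun x hx => Nat.mod_eq_of_lt (mem_range.mp (hA hx))), image_id]

lemma eqMod_iff {k l : ℕ} {A : Finset ℕ} (hA : A ⊆ range k) :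
    eqMod k (shiftSet A l) A ↔ shmod k l A = A := by
  unfold eqMod
  rw [resSet_shift, resSet_self hA]

lemma shmod_comp (k l m : ℕ) (A : Finset ℕ) :
    shmod k l (shmod k m A) = shmod k (m + l) A := by
  unfold shmod
  rw [image_image]
  apply image_congr
  intro x _
  simp only [Function.comp_apply]
  rw [Nat.mod_add_mod, ← add_assoc]

lemma shmod_zero {k : ℕ} {A : Finset ℕ} (hA : A ⊆ range k) : shmod k 0 A = A := by
  unfold shmod
  rw [show A.image (fun x => (x + 0) % k) = A.image id from
    image_congr (fun x hx => by simp [Nat.mod_eq_of_lt (mem_range.mp (hA hx))]), image_id]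

section Aux

variable {k : ℕ} {A : Finset ℕ}

lemma shmod_k (hA : A ⊆ range k) : shmod k k A = A := by
  unfold shmod
  rw [show A.image (fun x => (x + k) % k) = A.image id from
    image_congr (fun x hx => by
      simp [Nat.add_mod_right, Nat.mod_eq_of_lt (mem_range.mp (hA hx))]), image_id]

lemma shmod_mul (hA : A ⊆ range k) {d : ℕ} (hd : shmod k d A = A) (q : ℕ) :
    shmod k (d * q) A = A := by
  induction q with
  | zero => simpa using shmod_zero hA
  | succ q ih =>
    have h := shmod_comp k d (d * q) A
    rw [ih, hd] at h
    rw [Nat.mul_succ, add_comm (d*q) d] at *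
    rw [← h]

lemma shmod_mod (hA : A ⊆ range k) {d l : ℕ} (hd : shmod k d A = A)
    (hl : shmod k l A = A) : shmod k (l % d) A = A := by
  rcases eq_or_ne d 0 with rfl | hd0
  · simpa using hl
  · have h1 := shmod_mul hA hd (l / d)
    have h2 := shmod_comp k (l % d) (d * (l / d)) A
    rw [h1, Nat.div_add_mod] at h2
    rw [h2, hl]

lemma fk_mem (hk0 : 0 < k) (hA : A ⊆ range k) :
    0 < fk k A ∧ shmod k (fk k A) A = A := by
  have hkS : k ∈ {l : ℕ | 0 < l ∧ eqMod k (shiftSet A l) A} :=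
    ⟨hk0, (eqMod_iff hA).mpr (shmod_k hA)⟩
  have h := Nat.sInf_mem (⟨k, hkS⟩ : {l : ℕ | 0 < l ∧ eqMod k (shiftSet A l) A}.Nonempty)
  exact ⟨h.1, (eqMod_iff hA).mp h.2⟩

lemma fk_dvd (hk0 : 0 < k) (hA : A ⊆ range k) {l : ℕ} (hl0 : 0 < l)
    (hl : shmod k l A = A) : fk k A ∣ l := by
  have hm := fk_mem hk0 hA
  have hmod := shmod_mod hA hm.2 hl
  by_contra h
  have hr : l % fk k A ≠ 0 := fun h0 => h (Nat.dvd_of_mod_eq_zero h0)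
  have h1 : fk k A ≤ l % fk k A :=
    Nat.sInf_le ⟨Nat.pos_of_ne_zero hr, (eqMod_iff hA).mpr hmod⟩
  have h2 := Nat.mod_lt l hm.1
  omega

lemma fk_dvd_k (hk0 : 0 < k) (hA : A ⊆ range k) : fk k A ∣ k :=
  fk_dvd hk0 hA hk0 (shmod_k hA)

lemma shmod_of_fk_dvd (hk0 : 0 < k) (hA : A ⊆ range k) {n : ℕ} (hn : fk k A ∣ n) :
    shmod k n A = A := by
  obtain ⟨t, rfl⟩ := hn
  exact shmod_mul hA (fk_mem hk0 hA).2 t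

lemma mem_of_step {d x : ℕ} (hd : shmod k d A = A) (hx : x ∈ A) : (x + d) % k ∈ A := by
  have : (x + d) % k ∈ shmod k d A := mem_image_of_mem _ hx
  rwa [hd] at this

lemma mem_iter (hA : A ⊆ range k) {d x : ℕ} (hd : shmod k d A = A) (hx : x ∈ A) (q : ℕ) :
    (x + d * q) % k ∈ A := by
  induction q with
  | zero => simpa [Nat.mod_eq_of_lt (mem_range.mp (hA hx))] using hx
  | succ q ih =>
    have h := mem_of_step hd ih
    rw [Nat.mod_add_mod] at h
    rw [Nat.mul_succ, ← add_assoc]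
    exact h

lemma mem_of_class (hk0 : 0 < k) (hA : A ⊆ range k) {d x y : ℕ} (hdk : d ∣ k)
    (hd : shmod k d A = A) (hx : x ∈ A) (hy : y < k) (hxy : y % d = x % d) : y ∈ A := by
  have hd0 : 0 < d := Nat.pos_of_dvd_of_pos hdk hk0
  have hxk : x < k := mem_range.mp (hA hx)
  have hkd : k % d = 0 := by
    obtain ⟨c, rfl⟩ := hdk
    exact Nat.mul_mod_right d c
  have hmod : x ≡ y + k [MOD d] := by
    unfold Nat.ModEq
    simp [Nat.add_mod, hkd, hxy]
  have hdvd : d ∣ y + k - x := (Nat.modEq_iff_dvd' (by omega)).mp hmod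
  have hq : x + d * ((y + k - x) / d) = y + k := by
    rw [Nat.mul_div_cancel' hdvd]; omega
  have h := mem_iter hA hd hx ((y + k - x) / d)
  rw [hq, Nat.add_mod_right, Nat.mod_eq_of_lt hy] at h
  exact h

/-- An invariant set is the union of its residue classes mod `d`. -/
lemma eq_filter_classes (hk0 : 0 < k) (hA : A ⊆ range k) {d : ℕ} (hdk : d ∣ k)
    (hd : shmod k d A = A) :
    A = (range k).filter (fun y => y % d ∈ A.image (· % d)) := by
  ext y
  simp only [mem_filter, mem_range, mem_image]
  constructor
  · intro hy
    exact ⟨mem_range.mp (hA hy), y, hy, rfl⟩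
  · rintro ⟨hy, x, hx, hxy⟩
    exact mem_of_class hk0 hA hdk hd hx hy hxy.symm

lemma card_fiber (hk0 : 0 < k) {d b : ℕ} (hdk : d ∣ k) (hb : b < d) :
    ((range k).filter (fun y => y % d = b)).card = k / d := by
  have hd0 : 0 < d := Nat.pos_of_dvd_of_pos hdk hk0
  have hset : (range k).filter (fun y => y % d = b)
      = (range (k / d)).image (fun t => d * t + b) := by
    ext y
    simp only [mem_filter, mem_range, mem_image]
    constructor
    · rintro ⟨hyk, hyb⟩
      refine ⟨y / d, Nat.div_lt_div_of_lt_of_dvd hdk hyk, ?_⟩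
      rw [← hyb]
      exact Nat.div_add_mod y d
    · rintro ⟨t, ht, rfl⟩
      constructor
      · have h1 : d * (t + 1) ≤ d * (k / d) := Nat.mul_le_mul_left d ht
        rw [Nat.mul_div_cancel' hdk] at h1
        rw [Nat.mul_succ] at h1
        omega
      · rw [Nat.mul_add_mod, Nat.mod_eq_of_lt hb]
  rw [hset, card_image_of_injective _ (fun a b' h => Nat.eq_of_mul_eq_mul_left hd0
    (by omega)), card_range]

lemma card_F (hk0 : 0 < k) {d : ℕ} (hdk : d ∣ k) {B : Finset ℕ} (hB : B ⊆ range d) :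
    ((range k).filter (fun y => y % d ∈ B)).card = (k / d) * B.card := by
  rw [card_eq_sum_card_fiberwise (s := (range k).filter (fun y => y % d ∈ B)) (f := fun y => y % d) (t := B)
    (fun y hy => (mem_filter.mp hy).2)]
  have hcong : ∀ b ∈ B,
      (((range k).filter (fun y => y % d ∈ B)).filter (fun y => y % d = b)).card = k / d := by
    intro b hb
    have : ((range k).filter (fun y => y % d ∈ B)).filter (fun y => y % d = b)
        = (range k).filter (fun y => y % d = b) := by
      ext y
      simp only [mem_filter, mem_range]
      constructor
      · rintro ⟨⟨h1, _⟩, h3⟩; exact ⟨h1, h3⟩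
      · rintro ⟨h1, h3⟩; exact ⟨⟨h1, h3 ▸ hb⟩, h3⟩
    rw [this]
    exact card_fiber hk0 hdk (mem_range.mp (hB hb))
  rw [sum_congr rfl hcong, sum_const, smul_eq_mul, mul_comm]

/-- Counting invariant sets. -/
lemma count_inv {k r : ℕ} (hk0 : 0 < k) {d : ℕ} (hdk : d ∣ k) :
    ((Acoll r k).filter (fun A => shmod k d A = A)).card
      = if (k / d) ∣ r then d.choose (r / (k / d)) else 0 := by
  have hd0 : 0 < d := Nat.pos_of_dvd_of_pos hdk hk0
  have hs0 : 0 < k / d := Nat.div_pos (Nat.le_of_dvd hk0 hdk) hd0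
  set s := k / d with hs
  -- the map from subsets of `range d` to invariant sets
  set F : Finset ℕ → Finset ℕ := fun B => (range k).filter (fun y => y % d ∈ B) with hF
  have hmemAcoll : ∀ A ∈ (Acoll r k).filter (fun A => shmod k d A = A),
      A ⊆ range k ∧ A.card = r ∧ shmod k d A = A := by
    intro A hA
    rw [mem_filter, Acoll, mem_filter, mem_powerset] at hA
    exact ⟨hA.1.1, hA.1.2, hA.2⟩
  -- membership characterization of the invariant family
  have hchar : ∀ A ∈ (Acoll r k).filter (fun A => shmod k d A = A),
      A = F (A.image (· % d)) ∧ s * (A.image (· % d)).card = r := by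
    intro A hA
    obtain ⟨hAr, hAc, hAi⟩ := hmemAcoll A hA
    have hBsub : A.image (· % d) ⊆ range d := by
      intro b hb
      obtain ⟨x, _, rfl⟩ := mem_image.mp hb
      exact mem_range.mpr (Nat.mod_lt x hd0)
    have heq : A = F (A.image (· % d)) := eq_filter_classes hk0 hAr hdk hAi
    refine ⟨heq, ?_⟩
    have h2 : A.card = k / d * (A.image (· % d)).card := by
      nth_rewrite 1 [heq]
      exact card_F hk0 hdk hBsub
    rw [hs, ← h2, hAc]
  by_cases hdr : s ∣ r
  · rw [if_pos hdr]
    have himg : (Acoll r k).filter (fun A => shmod k d A = A)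
        = (powersetCard (r / s) (range d)).image F := by
      ext A
      constructor
      · intro hA
        obtain ⟨heq, hcard⟩ := hchar A hA
        rw [mem_image]
        refine ⟨A.image (· % d), ?_, heq.symm⟩
        rw [mem_powersetCard]
        constructor
        · intro b hb
          obtain ⟨x, _, rfl⟩ := mem_image.mp hb
          exact mem_range.mpr (Nat.mod_lt x hd0)
        · have hs0' : 0 < s := hs0
          rw [← hcard, Nat.mul_div_cancel_left _ hs0']
      · intro hA
        obtain ⟨B, hB, rfl⟩ := mem_image.mp hA
        rw [mem_powersetCard] at hB
        obtain ⟨hBsub, hBcard⟩ := hB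
        have hFsub : F B ⊆ range k := filter_subset _ _
        have hFcard : (F B).card = r := by
          rw [hF]
          have := card_F hk0 hdk hBsub
          rw [this, hBcard, ← hs, Nat.mul_div_cancel' hdr]
        have hFinv : shmod k d (F B) = F B := by
          have hsub : shmod k d (F B) ⊆ F B := by
            intro y hy
            obtain ⟨x, hx, rfl⟩ := mem_image.mp hy
            rw [hF, mem_filter] at hx ⊢
            refine ⟨mem_range.mpr (Nat.mod_lt _ hk0), ?_⟩
            rw [Nat.mod_mod_of_dvd _ hdk, Nat.add_mod_right]
            exact hx.2
          refine eq_of_subset_of_card_le hsub ?_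
          have hinjOn : Set.InjOn (fun x => (x + d) % k) (F B : Finset ℕ) := by
            intro x hx y hy hxy
            have hxk : x < k := mem_range.mp (hFsub hx)
            have hyk : y < k := mem_range.mp (hFsub hy)
            have h5 : x ≡ y [MOD k] := Nat.ModEq.add_right_cancel' d hxy
            rwa [Nat.ModEq, Nat.mod_eq_of_lt hxk, Nat.mod_eq_of_lt hyk] at h5
          rw [shmod, card_image_of_injOn hinjOn]
        rw [mem_filter, Acoll, mem_filter, mem_powerset]
        exact ⟨⟨hFsub, hFcard⟩, hFinv⟩
    have hinj : Set.InjOn F (powersetCard (r / s) (range d)) := by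
      intro B1 hB1 B2 hB2 hEq
      rw [mem_coe, mem_powersetCard] at hB1 hB2
      ext b
      by_cases hbd : b < d
      · have hbk : b < k := lt_of_lt_of_le hbd (Nat.le_of_dvd hk0 hdk)
        have h1 : b ∈ F B1 ↔ b ∈ B1 := by
          rw [hF, mem_filter, mem_range, Nat.mod_eq_of_lt hbd]
          exact ⟨fun h => h.2, fun h => ⟨hbk, h⟩⟩
        have h2 : b ∈ F B2 ↔ b ∈ B2 := by
          rw [hF, mem_filter, mem_range, Nat.mod_eq_of_lt hbd]
          exact ⟨fun h => h.2, fun h => ⟨hbk, h⟩⟩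
        rw [← h1, ← h2, hEq]
      · constructor
        · intro hb; exact absurd (mem_range.mp (hB1.1 hb)) hbd
        · intro hb; exact absurd (mem_range.mp (hB2.1 hb)) hbd
    rw [himg, card_image_of_injOn hinj, card_powersetCard, card_range]
  · rw [if_neg hdr]
    rw [card_eq_zero, eq_empty_iff_forall_notMem]
    intro A hA
    obtain ⟨_, hcard⟩ := hchar A hA
    exact hdr ⟨_, hcard.symm⟩

/-- The divisor-sum identity: summing over divisors of `n ∣ k`. -/
lemma gsum {k r : ℕ} (hk0 : 0 < k) {n : ℕ} (hn0 : 0 < n) (hnk : n ∣ k) :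
    ∑ e ∈ n.divisors, (Asub e r k).card
      = ((Acoll r k).filter (fun A => shmod k n A = A)).card := by
  classical
  have hmem : ∀ A ∈ (Acoll r k).filter (fun A => shmod k n A = A), fk k A ∈ n.divisors := by
    intro A hA
    rw [mem_filter, Acoll, mem_filter, mem_powerset] at hA
    exact Nat.mem_divisors.mpr ⟨fk_dvd hk0 hA.1.1 hn0 hA.2, hn0.ne'⟩
  rw [card_eq_sum_card_fiberwise hmem]
  apply sum_congr rfl
  intro e he
  have hen : e ∣ n := Nat.dvd_of_mem_divisors he
  have hset : ((Acoll r k).filter (fun A => shmod k n A = A)).filter (fun A => fk k A = e)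
      = (Acoll r k).filter (fun A => fk k A = e) := by
    ext A
    simp only [mem_filter, and_assoc]
    constructor
    · rintro ⟨h1, _, h3⟩; exact ⟨h1, h3⟩
    · rintro ⟨h1, h3⟩
      have hAr : A ⊆ range k := by
        rw [Acoll, mem_filter, mem_powerset] at h1; exact h1.1
      exact ⟨h1, shmod_of_fk_dvd hk0 hAr (h3 ▸ hen), h3⟩
  have hAsub : Asub e r k = (Acoll r k).filter (fun A => fk k A = e) := by
    unfold Asub
    exact Finset.filter_congr_decidable _ _ _
  rw [hset, hAsub]

end Aux

lemma gcd_divisors_eq {k r : ℕ} (hk0 : k ≠ 0) :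
    (Nat.gcd k r).divisors = k.divisors.filter (· ∣ r) := by
  ext d
  simp only [Nat.mem_divisors, mem_filter, Nat.dvd_gcd_iff]
  constructor
  · rintro ⟨⟨h1, h2⟩, _⟩
    exact ⟨⟨h1, hk0⟩, h2⟩
  · rintro ⟨⟨h1, _⟩, h2⟩
    exact ⟨⟨h1, h2⟩, Nat.gcd_ne_zero_left hk0⟩

/-- the number of `r`-element subsets `A` of `{0, ..., k-1}` with `f_k(A) = k`
equals `∑_{s ∣ gcd(k, r)} C(k/s, r/s) * μ(s)`. -/
theorem card_Asub_max (k r : ℕ) (hk : 2 ≤ k) (hr1 : 1 ≤ r) (hrk : r ≤ k) :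
    ((Asub k r k).card : ℤ) =
      ∑ s ∈ (Nat.gcd k r).divisors,
        ((k / s).choose (r / s) : ℤ) * ArithmeticFunction.moebius s := by
  have hk0 : 0 < k := by omega
  set f : ℕ → ℤ := fun e => ((Asub e r k).card : ℤ) with hf
  set g : ℕ → ℤ := fun n =>
    (((Acoll r k).filter (fun A => shmod k n A = A)).card : ℤ) with hg
  have H : ∀ n > 0, n ∈ {n : ℕ | n ∣ k} → ∑ i ∈ n.divisors, f i = g n := by
    intro n hn0 hnk
    have := gsum (r := r) hk0 hn0 hnk
    rw [hg]
    push_cast [← this]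
    rfl
  have key := (ArithmeticFunction.sum_eq_iff_sum_mul_moebius_eq_on {n : ℕ | n ∣ k}
    (fun m n hmn hn => hmn.trans hn)).mp H k hk0 (dvd_refl k)
  simp only [Int.cast_id] at key
  rw [Nat.sum_divisorsAntidiagonal (fun a b => (ArithmeticFunction.moebius a : ℤ) * g b)]
    at key
  rw [show ((Asub k r k).card : ℤ) = f k from rfl, ← key]
  have hterm : ∀ d ∈ k.divisors,
      (ArithmeticFunction.moebius d : ℤ) * g (k / d)
        = if d ∣ r then ((k / d).choose (r / d) : ℤ) * ArithmeticFunction.moebius d else 0 := by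
    intro d hd
    have hdk : d ∣ k := Nat.dvd_of_mem_divisors hd
    have hd0 : 0 < d := Nat.pos_of_mem_divisors hd
    have hkd_dvd : k / d ∣ k := Nat.div_dvd_of_dvd hdk
    have hcount := count_inv (r := r) hk0 hkd_dvd
    rw [Nat.div_div_self hdk hk0.ne'] at hcount
    rw [hg]
    simp only []
    rw [hcount]
    by_cases hdr : d ∣ r
    · rw [if_pos hdr, if_pos hdr]
      push_cast
      ring
    · rw [if_neg hdr, if_neg hdr]
      simp
  rw [sum_congr rfl hterm, ← sum_filter, ← gcd_divisors_eq hk0.ne']
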